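/- Smoothness of B-splines: for every order k ≥ 1 and index 0 ≤ ℓ ≤ n−k, the B-spline B_{ℓ,k} is (k−1)-times continuously differentiable on all of ℝ. -/

import Mathlib

/-- The Cox–de Boor recursion for B-splines over the knot sequence `ξ`:
`coxDeBoor ξ k ℓ` is the B-spline `B_{ℓ,k}`. -/
noncomputable def coxDeBoor (ξ : ℕ → ℝ) : ℕ → ℕ → ℝ → ℝ
  | 0, ℓ, x => if ξ ℓ < x ∧ x ≤ ξ (ℓ + 1) then 1 else 0
  | k + 1, ℓ, x =>
      ((x - ξ ℓ) / (ξ (ℓ + (k + 1)) - ξ ℓ)) * coxDeBoor ξ k ℓ x +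
      ((ξ (ℓ + 1 + (k + 1)) - x) / (ξ (ℓ + 1 + (k + 1)) - ξ (ℓ + 1))) * coxDeBoor ξ k (ℓ + 1) x

/-- Truncated power function `(t - x)_+^k` (with the convention `x ≤ t`). -/
noncomputable def trunc (k : ℕ) (t x : ℝ) : ℝ := if x ≤ t then (t - x) ^ k else 0

lemma trunc_succ (k : ℕ) (t x : ℝ) : trunc (k + 1) t x = (t - x) * trunc k t x := by
  unfold trunc; split <;> ring

lemma abs_trunc_le (k : ℕ) (t x : ℝ) : |trunc k t x| ≤ |t - x| ^ k := by
  unfold trunc; split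
  · rw [abs_pow]
  · simp only [abs_zero]
    positivity

lemma trunc_hasDerivAt (k : ℕ) (t x : ℝ) :
    HasDerivAt (trunc (k + 2) t) (-(k + 2) * trunc (k + 1) t x) x := by
  rcases lt_trichotomy x t with h | h | h
  · have h1 : HasDerivAt (fun y : ℝ => (t - y) ^ (k + 2))
        (↑(k + 2) * (t - x) ^ (k + 1) * (-1)) x := by
      simpa using (((hasDerivAt_id x).const_sub t).fun_pow (k + 2))
    have h2 : trunc (k + 2) t =ᶠ[nhds x] fun y : ℝ => (t - y) ^ (k + 2) := by
      filter_upwards [Iio_mem_nhds h] with y hy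
      have : y ≤ t := le_of_lt (Set.mem_Iio.mp hy)
      simp [trunc, this]
    have := h1.congr_of_eventuallyEq h2
    refine this.congr_deriv ?_
    rw [show trunc (k + 1) t x = (t - x) ^ (k + 1) from if_pos h.le]
    push_cast; ring
  · subst h
    have hval : trunc (k + 1) x x = 0 := by simp [trunc]
    rw [hval, mul_zero]
    rw [hasDerivAt_iff_tendsto_slope]
    have hbound : ∀ᶠ y in nhdsWithin x {x}ᶜ,
        ‖slope (trunc (k + 2) x) x y‖ ≤ |y - x| ^ (k + 1) := by
      filter_upwards [self_mem_nhdsWithin] with y hy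
      have hyx : y ≠ x := hy
      have hfx : trunc (k + 2) x x = 0 := by simp [trunc]
      rw [slope_def_field, hfx, sub_zero, Real.norm_eq_abs, abs_div]
      have h1 : |trunc (k + 2) x y| ≤ |y - x| ^ (k + 2) := by
        have := abs_trunc_le (k + 2) x y
        rwa [abs_sub_comm] at this
      have h2 : (0 : ℝ) < |y - x| := abs_pos.2 (sub_ne_zero.2 hyx)
      rw [div_le_iff₀ h2]
      calc |trunc (k + 2) x y| ≤ |y - x| ^ (k + 2) := h1
        _ = |y - x| ^ (k + 1) * |y - x| := by ring
    have htend : Filter.Tendsto (fun y : ℝ => |y - x| ^ (k + 1))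
        (nhdsWithin x {x}ᶜ) (nhds 0) := by
      have hc : Continuous fun y : ℝ => |y - x| ^ (k + 1) := by continuity
      have := hc.tendsto x
      simp only [sub_self, abs_zero, zero_pow (Nat.succ_ne_zero k)] at this
      exact this.mono_left nhdsWithin_le_nhds
    exact squeeze_zero_norm' hbound htend
  · have h1 : HasDerivAt (fun _ : ℝ => (0 : ℝ)) 0 x := hasDerivAt_const x 0
    have h2 : trunc (k + 2) t =ᶠ[nhds x] fun _ : ℝ => (0 : ℝ) := by
      filter_upwards [Ioi_mem_nhds h] with y hy
      have : ¬ y ≤ t := not_le.2 (Set.mem_Ioi.mp hy)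
      simp [trunc, this]
    have := h1.congr_of_eventuallyEq h2
    refine this.congr_deriv ?_
    rw [show trunc (k + 1) t x = 0 from if_neg (not_le.2 h)]
    ring

lemma trunc_contDiff (k : ℕ) (t : ℝ) : ContDiff ℝ k (trunc (k + 1) t) := by
  induction k with
  | zero =>
    have h : trunc 1 t = fun x => max (t - x) 0 := by
      funext x
      unfold trunc
      split_ifs with h
      · rw [pow_one, max_eq_left (by linarith)]
      · rw [max_eq_right (by push_neg at h; linarith)]
    rw [show (0 : ℕ) + 1 = 1 from rfl, h,
      show ((0 : ℕ) : WithTop ℕ∞) = 0 by norm_cast, contDiff_zero]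
    exact (continuous_const.sub continuous_id).max continuous_const
  | succ k ih =>
    rw [show ((k + 1 : ℕ) : WithTop ℕ∞) = (k : WithTop ℕ∞) + 1 by push_cast; ring,
      contDiff_succ_iff_deriv]
    refine ⟨fun x => (trunc_hasDerivAt k t x).differentiableAt, by simp, ?_⟩
    have hd : deriv (trunc (k + 2) t) = fun x => -(k + 2) * trunc (k + 1) t x :=
      funext fun x => (trunc_hasDerivAt k t x).deriv
    rw [hd]
    exact contDiff_const.mul ih

/-- Divided differences over consecutive knots `ξ ℓ, …, ξ (ℓ + m)`. -/
noncomputable def divDiff (ξ : ℕ → ℝ) : ℕ → ℕ → (ℝ → ℝ) → ℝ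
  | 0, ℓ, f => f (ξ ℓ)
  | m + 1, ℓ, f => (divDiff ξ m (ℓ + 1) f - divDiff ξ m ℓ f) / (ξ (ℓ + m + 1) - ξ ℓ)

lemma divDiff_succ (ξ : ℕ → ℝ) (m ℓ : ℕ) (f : ℝ → ℝ) :
    divDiff ξ (m + 1) ℓ f
      = (divDiff ξ m (ℓ + 1) f - divDiff ξ m ℓ f) / (ξ (ℓ + m + 1) - ξ ℓ) := rfl

lemma sub_ne_zero_of_strictMono {ξ : ℕ → ℝ} (hξ : StrictMono ξ) {i j : ℕ} (h : j < i) :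
    ξ i - ξ j ≠ 0 := sub_ne_zero.2 (hξ h).ne'

/-- Leibniz rule for divided differences against a linear factor. -/
lemma divDiff_mul_linear (ξ : ℕ → ℝ) (hξ : StrictMono ξ) (x : ℝ) :
    ∀ (m ℓ : ℕ) (f : ℝ → ℝ),
      divDiff ξ (m + 1) ℓ (fun t => (t - x) * f t)
        = (ξ ℓ - x) * divDiff ξ (m + 1) ℓ f + divDiff ξ m (ℓ + 1) f := by
  intro m
  induction m with
  | zero =>
    intro ℓ f
    have hd : ξ (ℓ + 0 + 1) - ξ ℓ ≠ 0 := sub_ne_zero_of_strictMono hξ (by omega)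
    simp only [divDiff]
    field_simp
    ring
  | succ m ih =>
    intro ℓ f
    have hd : ξ (ℓ + (m + 1) + 1) - ξ ℓ ≠ 0 := sub_ne_zero_of_strictMono hξ (by omega)
    have hd' : ξ (ℓ + 1 + m + 1) - ξ (ℓ + 1) ≠ 0 := sub_ne_zero_of_strictMono hξ (by omega)
    have hA' : divDiff ξ (m + 1) (ℓ + 1) f * (ξ (ℓ + 1 + m + 1) - ξ (ℓ + 1))
        = divDiff ξ m (ℓ + 1 + 1) f - divDiff ξ m (ℓ + 1) f := by
      rw [divDiff_succ, div_mul_cancel₀ _ hd']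
    rw [divDiff_succ ξ (m + 1) ℓ (fun t => (t - x) * f t), ih (ℓ + 1) f, ih ℓ f,
      divDiff_succ ξ (m + 1) ℓ f]
    have hidx : ℓ + 1 + m + 1 = ℓ + (m + 1) + 1 := by omega
    rw [hidx] at hA'
    field_simp
    linear_combination -hA'

/-- B-splines as divided differences of truncated powers. -/
lemma coxDeBoor_eq_divDiff (ξ : ℕ → ℝ) (hξ : StrictMono ξ) :
    ∀ (k ℓ : ℕ) (x : ℝ),
      coxDeBoor ξ k ℓ x
        = (ξ (ℓ + k + 1) - ξ ℓ) * divDiff ξ (k + 1) ℓ (fun t => trunc k t x) := by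
  intro k
  induction k with
  | zero =>
    intro ℓ x
    have h01 : ξ ℓ < ξ (ℓ + 1) := hξ (by omega)
    have hd : ξ (ℓ + 1) - ξ ℓ ≠ 0 := sub_ne_zero.2 h01.ne'
    simp only [coxDeBoor, divDiff, trunc, pow_zero, Nat.add_zero]
    rw [← mul_div_assoc, mul_div_cancel_left₀ _ hd]
    rcases le_or_gt x (ξ ℓ) with hx0 | hx0 <;> rcases le_or_gt x (ξ (ℓ + 1)) with hx1 | hx1
    · rw [if_neg (fun hc => absurd hc.1 (not_lt.2 hx0)), if_pos hx1, if_pos hx0]; ring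
    · exfalso; linarith
    · rw [if_pos ⟨hx0, hx1⟩, if_pos hx1, if_neg (not_le.2 hx0)]; ring
    · rw [if_neg (fun hc => absurd hc.2 (not_le.2 hx1)), if_neg (not_le.2 hx1),
        if_neg (not_le.2 (h01.trans hx1))]; ring
  | succ k ih =>
    intro ℓ x
    have hdA : ξ (ℓ + (k + 1)) - ξ ℓ ≠ 0 := sub_ne_zero_of_strictMono hξ (by omega)
    have hdB : ξ (ℓ + 1 + (k + 1)) - ξ (ℓ + 1) ≠ 0 := sub_ne_zero_of_strictMono hξ (by omega)
    have hstep : coxDeBoor ξ (k + 1) ℓ x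
        = ((x - ξ ℓ) / (ξ (ℓ + (k + 1)) - ξ ℓ)) * coxDeBoor ξ k ℓ x +
          ((ξ (ℓ + 1 + (k + 1)) - x) / (ξ (ℓ + 1 + (k + 1)) - ξ (ℓ + 1))) *
            coxDeBoor ξ k (ℓ + 1) x := rfl
    rw [hstep, ih ℓ x, ih (ℓ + 1) x]
    have htr : (fun t => trunc (k + 1) t x) = fun t => (t - x) * trunc k t x :=
      funext fun t => trunc_succ k t x
    rw [htr, divDiff_mul_linear ξ hξ x (k + 1) ℓ (fun t => trunc k t x),
      divDiff_succ ξ (k + 1) ℓ (fun t => trunc k t x)]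
    simp only [show ℓ + 1 + k + 1 = ℓ + 1 + (k + 1) from by omega,
      show ℓ + (k + 1) + 1 = ℓ + (k + 1) + 1 from rfl,
      show ℓ + k + 1 = ℓ + (k + 1) from by omega,
      show ℓ + 1 + (k + 1) = ℓ + (k + 1) + 1 from by omega]
    have hdB' : ξ (ℓ + (k + 1) + 1) - ξ (ℓ + 1) ≠ 0 := sub_ne_zero_of_strictMono hξ (by omega)
    have hdC : ξ (ℓ + (k + 1) + 1) - ξ ℓ ≠ 0 := sub_ne_zero_of_strictMono hξ (by omega)
    field_simp
    ring

lemma divDiff_trunc_contDiff (ξ : ℕ → ℝ) (k : ℕ) :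
    ∀ m ℓ : ℕ, ContDiff ℝ k (fun x => divDiff ξ m ℓ (fun t => trunc (k + 1) t x)) := by
  intro m
  induction m with
  | zero => intro ℓ; exact trunc_contDiff k (ξ ℓ)
  | succ m ih =>
    intro ℓ
    have h : (fun x => divDiff ξ (m + 1) ℓ (fun t => trunc (k + 1) t x))
        = fun x => (divDiff ξ m (ℓ + 1) (fun t => trunc (k + 1) t x)
            - divDiff ξ m ℓ (fun t => trunc (k + 1) t x)) / (ξ (ℓ + m + 1) - ξ ℓ) := rfl
    rw [h]
    exact ((ih (ℓ + 1)).sub (ih ℓ)).div_const _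

lemma coxDeBoor_congr (ξ ξ' : ℕ → ℝ) :
    ∀ k ℓ : ℕ, (∀ i, ℓ ≤ i → i ≤ ℓ + k + 1 → ξ i = ξ' i) →
      coxDeBoor ξ k ℓ = coxDeBoor ξ' k ℓ := by
  intro k
  induction k with
  | zero =>
    intro ℓ h
    funext x
    simp only [coxDeBoor]
    rw [h ℓ le_rfl (by omega), h (ℓ + 1) (by omega) (by omega)]
  | succ k ih =>
    intro ℓ h
    funext x
    simp only [coxDeBoor]
    rw [ih ℓ (fun i h1 h2 => h i h1 (by omega)),
      ih (ℓ + 1) (fun i h1 h2 => h i (by omega) (by omega)),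
      h ℓ le_rfl (by omega), h (ℓ + (k + 1)) (by omega) (by omega),
      h (ℓ + 1) (by omega) (by omega), h (ℓ + 1 + (k + 1)) (by omega) (by omega)]

/-- Smoothness of B-splines: the B-spline of order `k ≥ 1` is `(k-1)`-times
continuously differentiable on all of `ℝ`. -/
theorem bspline_contDiff
    (n : ℕ) (ξ : ℕ → ℝ) (hξ : ∀ i, i ≤ n → ξ i < ξ (i + 1))
    (k ℓ : ℕ) (hk : 1 ≤ k) (hℓ : ℓ + k ≤ n) :
    ContDiff ℝ ((k : ℕ) - 1 : ℕ) (coxDeBoor ξ k ℓ) := by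
  obtain ⟨k', rfl⟩ : ∃ k', k = k' + 1 := ⟨k - 1, by omega⟩
  set ξ' : ℕ → ℝ := fun i => if i ≤ n + 1 then ξ i else ξ (n + 1) + ((i - (n + 1) : ℕ) : ℝ)
    with hξ'
  have hmono : StrictMono ξ' := by
    apply strictMono_nat_of_lt_succ
    intro i
    show (if i ≤ n + 1 then ξ i else ξ (n + 1) + ((i - (n + 1) : ℕ) : ℝ)) <
        (if i + 1 ≤ n + 1 then ξ (i + 1) else ξ (n + 1) + ((i + 1 - (n + 1) : ℕ) : ℝ))
    by_cases h1 : i + 1 ≤ n + 1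
    · rw [if_pos (by omega : i ≤ n + 1), if_pos h1]
      exact hξ i (by omega)
    · rw [if_neg h1]
      by_cases h2 : i ≤ n + 1
      · have hi : i = n + 1 := by omega
        subst hi
        rw [if_pos le_rfl, show n + 1 + 1 - (n + 1) = 1 from by omega]
        norm_num
      · rw [if_neg h2]
        have h3 : ((i - (n + 1) : ℕ) : ℝ) < ((i + 1 - (n + 1) : ℕ) : ℝ) := by
          exact_mod_cast Nat.sub_lt_sub_right (by omega) (by omega)
        linarith
  have hagree : coxDeBoor ξ (k' + 1) ℓ = coxDeBoor ξ' (k' + 1) ℓ := by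
    apply coxDeBoor_congr
    intro i h1 h2
    show ξ i = if i ≤ n + 1 then ξ i else ξ (n + 1) + ((i - (n + 1) : ℕ) : ℝ)
    rw [if_pos (by omega : i ≤ n + 1)]
  rw [hagree]
  have hrepr : coxDeBoor ξ' (k' + 1) ℓ
      = fun x => (ξ' (ℓ + (k' + 1) + 1) - ξ' ℓ) *
          divDiff ξ' (k' + 1 + 1) ℓ (fun t => trunc (k' + 1) t x) :=
    funext fun x => coxDeBoor_eq_divDiff ξ' hmono (k' + 1) ℓ x
  rw [hrepr, show k' + 1 - 1 = k' from by omega]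
  exact contDiff_const.mul (divDiff_trunc_contDiff ξ' k' (k' + 1 + 1) ℓ)
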